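/- Let S(x,z) be a homogeneous cubic in 𝔖³ℝ^{2+2} such that the four linear forms ∂²S/∂x_i∂z_j (1 ≤ i,j ≤ 2) on ℝ⁴ are linearly independent. Then the Newton distance of S equals 3/4. -/

import Mathlib

open MvPolynomial

lemma coeff_pderiv' {σ R : Type*} [CommSemiring R] [DecidableEq σ] (i : σ) (m : σ →₀ ℕ)
    (φ : MvPolynomial σ R) :
    coeff m (pderiv i φ) = ((m i + 1 : ℕ) : R) * coeff (m + Finsupp.single i 1) φ := by
  induction φ using MvPolynomial.induction_on' with
  | monomial d a =>
    rw [pderiv_monomial, coeff_monomial, coeff_monomial]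
    split_ifs with h1 h2 h2
    · subst h2
      rw [add_tsub_cancel_right] at h1  -- maybe not needed
      have : ((m + Finsupp.single i 1 : _ →₀ ℕ)) i = m i + 1 := by simp
      rw [this]; push_cast; ring
    · have hdi : d i = 0 := by
        by_contra hdi
        apply h2
        have hle : Finsupp.single i 1 ≤ d := by
          rw [Finsupp.single_le_iff]; omega
        rw [← h1, tsub_add_cancel_of_le hle]
      simp [hdi]
    · exfalso; apply h1; subst h2; rw [add_tsub_cancel_right]
    · simp
  | add p q hp hq => simp [map_add, hp, hq, mul_add]

lemma udeg_support_sum {σ : Type*} [Fintype σ] (d : σ →₀ ℕ) :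
    ∑ k, d k = Finsupp.degree d := by
  rw [Finsupp.degree]
  exact (Finset.sum_subset (Finset.subset_univ _)
    (fun x _ hx => Finsupp.notMem_support_iff.mp hx)).symm

lemma eq_single_of_udeg_one {σ : Type*} [Fintype σ] [DecidableEq σ] (d : σ →₀ ℕ)
    (h : ∑ k, d k = 1) : ∃ k, d = Finsupp.single k 1 := by
  have hne : d ≠ 0 := by
    rintro rfl; simp at h
  obtain ⟨a, ha⟩ := Finsupp.ne_iff.mp hne
  simp only [Finsupp.coe_zero, Pi.zero_apply] at ha
  refine ⟨a, ?_⟩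
  have hda : d a = 1 := by
    have h1 : d a ≤ ∑ k, d k := Finset.single_le_sum (fun _ _ => Nat.zero_le _) (Finset.mem_univ a)
    omega
  have hrest : ∀ b, b ≠ a → d b = 0 := by
    intro b hb
    have := Finset.add_sum_erase Finset.univ d (Finset.mem_univ a)
    have hb' : d b ≤ ∑ k ∈ Finset.univ.erase a, d k :=
      Finset.single_le_sum (fun _ _ => Nat.zero_le _) (Finset.mem_erase.mpr ⟨hb, Finset.mem_univ b⟩)
    omega
  ext b
  rcases eq_or_ne b a with rfl | hb
  · simp [hda]
  · simp [Finsupp.single_apply, (Ne.symm hb), hrest b hb]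

def e4 : Fin 2 × Fin 2 ≃ (Fin 2 ⊕ Fin 2) where
  toFun p := if p.1 = 0 then Sum.inl p.2 else Sum.inr p.2
  invFun s := Sum.elim (fun i => ((0 : Fin 2), i)) (fun j => ((1 : Fin 2), j)) s
  left_inv := by decide
  right_inv := by decide


/-- "No pure x- or z-monomials". -/
def NoPureMonomials {nX nZ : ℕ} (S : MvPolynomial (Fin nX ⊕ Fin nZ) ℝ) : Prop :=
  ∀ d ∈ S.support, (∃ i, d (Sum.inl i) ≠ 0) ∧ (∃ j, d (Sum.inr j) ≠ 0)

/-- `N₀(S)`. -/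
noncomputable def newtonRegion {σ : Type*} (S : MvPolynomial σ ℝ) : Set (σ → ℝ) :=
  convexHull ℝ {p | ∃ d ∈ S.support, ∀ k, (d k : ℝ) ≤ p k}

/-- The Newton distance `δ(S) = inf {δ > 0 : (δ,…,δ) ∈ N₀(S)}`. -/
noncomputable def newtonDistance {σ : Type*} (S : MvPolynomial σ ℝ) : ℝ :=
  sInf {δ : ℝ | 0 < δ ∧ (fun _ => δ) ∈ newtonRegion S}

/-- if `S ∈ 𝔖³ℝ^{2+2}` and the four linear forms `∂²S/∂x_i∂z_j` are
linearly independent, then `δ(S) = 3/4`. -/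
theorem newtonDistance_cubic (S : MvPolynomial (Fin 2 ⊕ Fin 2) ℝ)
    (hS : S.IsHomogeneous 3) (hS' : NoPureMonomials S)
    (hind : LinearIndependent ℝ (fun p : Fin 2 × Fin 2 =>
      pderiv (Sum.inl p.1) (pderiv (Sum.inr p.2) S))) :
    newtonDistance S = 3 / 4 := by
  classical
  set P : Fin 2 × Fin 2 → MvPolynomial (Fin 2 ⊕ Fin 2) ℝ :=
    fun p => pderiv (Sum.inl p.1) (pderiv (Sum.inr p.2) S) with hP
  -- coefficient formula
  have hPcoeff : ∀ (p : Fin 2 × Fin 2) (m : (Fin 2 ⊕ Fin 2) →₀ ℕ),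
      coeff m (P p) = ((m (Sum.inl p.1) + 1 : ℕ) : ℝ) *
        ((((m + Finsupp.single (Sum.inl p.1) 1 : _ →₀ ℕ)) (Sum.inr p.2) + 1 : ℕ) : ℝ) *
        coeff (m + Finsupp.single (Sum.inl p.1) 1 + Finsupp.single (Sum.inr p.2) 1) S := by
    intro p m
    rw [hP]; simp only []
    rw [coeff_pderiv', coeff_pderiv', mul_assoc]
  -- support exponent degrees
  have hdeg : ∀ d ∈ S.support, ∑ k, ((d k : ℝ)) = 3 := by
    intro d hd
    have h1 : Finsupp.degree d = 3 := by
      rw [Finsupp.degree_eq_weight_one]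
      exact hS (MvPolynomial.mem_support_iff.mp hd)
    rw [← udeg_support_sum] at h1
    calc ∑ k, ((d k : ℝ)) = ((∑ k, d k : ℕ) : ℝ) := by push_cast; ring
    _ = 3 := by rw [h1]; norm_num
  have hdegN : ∀ d ∈ S.support, ∑ k, d k = 3 := by
    intro d hd
    have h1 : Finsupp.degree d = 3 := by
      rw [Finsupp.degree_eq_weight_one]
      exact hS (MvPolynomial.mem_support_iff.mp hd)
    rw [← udeg_support_sum] at h1; exact h1
  -- Lower bound: any admissible δ satisfies 3 ≤ 4δ
  have hlow : ∀ δ : ℝ, (fun _ => δ : (Fin 2 ⊕ Fin 2) → ℝ) ∈ newtonRegion S → 3 ≤ 4 * δ := by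
    intro δ hδ
    have hconv : Convex ℝ {p : (Fin 2 ⊕ Fin 2) → ℝ | 3 ≤ ∑ k, p k} := by
      apply convex_halfSpace_ge
      refine ⟨fun p q => ?_, fun r p => ?_⟩
      · simp only [Pi.add_apply]; exact Finset.sum_add_distrib
      · simp only [Pi.smul_apply]; exact (Finset.smul_sum).symm
    have hsub : {p : (Fin 2 ⊕ Fin 2) → ℝ | ∃ d ∈ S.support, ∀ k, (d k : ℝ) ≤ p k} ⊆
        {p | 3 ≤ ∑ k, p k} := by
      rintro p ⟨d, hd, hle⟩
      calc (3:ℝ) = ∑ k, ((d k : ℝ)) := (hdeg d hd).symm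
      _ ≤ ∑ k, p k := Finset.sum_le_sum fun k _ => hle k
    have h2 := convexHull_min hsub hconv hδ
    simp only [Set.mem_setOf_eq, Finset.sum_const, Finset.card_univ] at h2
    have hcard : (Fintype.card (Fin 2 ⊕ Fin 2)) = 4 := by simp
    rw [hcard] at h2
    simpa [nsmul_eq_mul] using h2
  -- The matrix of the linear forms
  set M : Matrix (Fin 2 × Fin 2) (Fin 2 × Fin 2) ℝ :=
    fun p q => coeff (Finsupp.single (e4 q) 1) (P p) with hM
  have hdet : M.det ≠ 0 := by
    intro h0
    obtain ⟨v, hv, hvM⟩ := Matrix.exists_vecMul_eq_zero_iff.mpr h0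
    set Q : MvPolynomial (Fin 2 ⊕ Fin 2) ℝ := ∑ p, v p • P p with hQdef
    have hQcoeff : ∀ m, coeff m Q = ∑ p, v p * coeff m (P p) := by
      intro m
      rw [hQdef, coeff_sum]
      exact Finset.sum_congr rfl fun p _ => coeff_smul m (v p) (P p)
    have hQ0 : Q = 0 := by
      apply MvPolynomial.ext
      intro d
      rw [coeff_zero]
      by_contra hc
      have hud : ∑ k, d k = 1 := by
        rw [hQcoeff] at hc
        obtain ⟨p, -, hp⟩ := Finset.exists_ne_zero_of_sum_ne_zero hc
        have hPp : coeff d (P p) ≠ 0 := fun h => hp (by rw [h, mul_zero])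
        rw [hPcoeff] at hPp
        have hcS : coeff (d + Finsupp.single (Sum.inl p.1) 1
            + Finsupp.single (Sum.inr p.2) 1) S ≠ 0 := fun h => hPp (by rw [h, mul_zero])
        have h3 := hdegN _ (MvPolynomial.mem_support_iff.mpr hcS)
        have hsplit : ∑ k, (d + Finsupp.single (Sum.inl p.1) 1
            + Finsupp.single (Sum.inr p.2) 1 : _ →₀ ℕ) k
            = (∑ k, d k) + 2 := by
          simp [Finsupp.add_apply, Finsupp.single_apply, Finset.sum_add_distrib]
        omega
      obtain ⟨k, rfl⟩ := eq_single_of_udeg_one d hud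
      apply hc
      have hcol : coeff (Finsupp.single k 1) Q = (Matrix.vecMul v M) (e4.symm k) := by
        rw [hQcoeff]
        simp [Matrix.vecMul, dotProduct, hM, e4.apply_symm_apply]
      rw [hcol, hvM, Pi.zero_apply]
    have hvz := Fintype.linearIndependent_iff.mp hind v (by rw [← hQdef, hQ0])
    exact hv (funext fun p => hvz p)
  -- The center point (3/4,...,3/4) lies in the hull of the support
  set T : Set ((Fin 2 ⊕ Fin 2) → ℝ) :=
    (fun (d : (Fin 2 ⊕ Fin 2) →₀ ℕ) (k : Fin 2 ⊕ Fin 2) => ((d k : ℝ))) '' (S.support : Set _)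
    with hT
  have hcT : (fun _ => (3/4 : ℝ) : (Fin 2 ⊕ Fin 2) → ℝ) ∈ convexHull ℝ T := by
    by_contra hcT
    have hTfin : T.Finite := S.support.finite_toSet.image _
    obtain ⟨f, u, hfc, hfb⟩ := geometric_hahn_banach_point_closed (convex_convexHull ℝ T)
      (hTfin.isCompact_convexHull (𝕜 := ℝ)).isClosed hcT
    set wf : (Fin 2 ⊕ Fin 2) → ℝ :=
      fun k => f (fun j => if k = j then (1:ℝ) else 0) with hwf
    have hflin : ∀ g : (Fin 2 ⊕ Fin 2) → ℝ, f g = ∑ k, g k * wf k := by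
      intro g
      conv_lhs => rw [pi_eq_sum_univ g]
      rw [map_sum]
      exact Finset.sum_congr rfl fun k _ => by rw [map_smul, smul_eq_mul]
    have hfd : ∀ d ∈ S.support, u < ∑ k, (d k : ℝ) * wf k := by
      intro d hd
      have h1 := hfb _ (subset_convexHull ℝ T ⟨d, hd, rfl⟩)
      rwa [hflin] at h1
    have hfcval : f (fun _ => (3/4 : ℝ)) = (3/4) * ∑ k, wf k := by
      rw [hflin, Finset.mul_sum]
    have hdet0 : M.det = 0 := by
      rw [Matrix.det_apply]
      apply Finset.sum_eq_zero
      intro σ _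
      have hprod0 : ∏ i, M (σ i) i = 0 := by
        by_contra hprod
        have hne : ∀ i, M (σ i) i ≠ 0 := by
          intro i h
          exact hprod (Finset.prod_eq_zero (Finset.mem_univ i) h)
        have hEnt : ∀ i : Fin 2 × Fin 2,
            u < wf (Sum.inl (σ i).1) + wf (Sum.inr (σ i).2) + wf (e4 i) := by
          intro i
          have h1 := hne i
          rw [hM] at h1
          simp only [] at h1
          rw [hPcoeff] at h1
          have h2 : coeff (Finsupp.single (e4 i) 1 + Finsupp.single (Sum.inl (σ i).1) 1
              + Finsupp.single (Sum.inr (σ i).2) 1) S ≠ 0 := fun h => h1 (by rw [h, mul_zero])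
          have h3 := hfd _ (MvPolynomial.mem_support_iff.mpr h2)
          refine lt_of_lt_of_eq h3 ?_
          simp [Finsupp.add_apply, Finsupp.single_apply, add_mul, Finset.sum_add_distrib,
            ite_mul, Finset.sum_ite_eq]
          ring
        have hsum : ∑ i : Fin 2 × Fin 2,
            (wf (Sum.inl (σ i).1) + wf (Sum.inr (σ i).2) + wf (e4 i)) = 3 * ∑ k, wf k := by
          rw [Finset.sum_add_distrib, Finset.sum_add_distrib]
          rw [Equiv.sum_comp e4 wf]
          rw [Equiv.sum_comp σ (fun p : Fin 2 × Fin 2 => wf (Sum.inl p.1))]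
          rw [Equiv.sum_comp σ (fun p : Fin 2 × Fin 2 => wf (Sum.inr p.2))]
          simp [Fintype.sum_prod_type, Fin.sum_univ_two, Fintype.sum_sum_type]
          ring
        have h4u : 4 * u < 3 * ∑ k, wf k := by
          have h5 := Finset.sum_lt_sum_of_nonempty (Finset.univ_nonempty)
            (fun i (_ : i ∈ Finset.univ) => hEnt i)
          rw [hsum] at h5
          simp only [Finset.sum_const, Finset.card_univ] at h5
          have hcard : (Fintype.card (Fin 2 × Fin 2)) = 4 := by simp
          rw [hcard] at h5
          simpa [nsmul_eq_mul] using h5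
        have h3s : 3 * ∑ k, wf k < 4 * u := by
          rw [hfcval] at hfc
          linarith
        linarith
      rw [hprod0, smul_zero]
    exact hdet hdet0
  have hcR : (fun _ => (3/4 : ℝ) : (Fin 2 ⊕ Fin 2) → ℝ) ∈ newtonRegion S := by
    refine convexHull_mono ?_ hcT
    rintro t ⟨d, hd, rfl⟩
    exact ⟨d, hd, fun k => le_refl _⟩
  have hset : ∀ δ ∈ {δ : ℝ | 0 < δ ∧ (fun _ => δ) ∈ newtonRegion S}, 3/4 ≤ δ := by
    rintro δ ⟨hδ0, hδ⟩
    have := hlow δ hδ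
    linarith
  have hmem : (3/4 : ℝ) ∈ {δ : ℝ | 0 < δ ∧ (fun _ => δ) ∈ newtonRegion S} :=
    ⟨by norm_num, hcR⟩
  rw [newtonDistance]
  exact le_antisymm (csInf_le ⟨3/4, hset⟩ hmem) (le_csInf ⟨3/4, hmem⟩ hset)
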